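/- Let Γ be a group acting on a variable set X and let C be a Γ-symmetric algebraic circuit over X and a field K. Then there exists a Γ-symmetric rigid circuit C' with ‖C'‖ ≤ ‖C‖ computing the same polynomial as C; moreover if C is a symmetric formula then C' is a symmetric formula with multiedges, and if C is a symmetric skew circuit then so is C'. -/

import Mathlib

/-- An algebraic circuit over variables `X` and field `K`: a finite DAG of gates, with
input gates labelled by `X ∪ K` (each such label occurring on at most one gate, and input
gates having no incoming wires), internal gates labelled `+` (`Sum.inr false`) or `×`
(`Sum.inr true`), wires with multiplicities, and a unique output gate. -/
structure Circuit (X K : Type) where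
  gates : Type
  [fintypeGates : Fintype gates]
  [decEqGates : DecidableEq gates]
  /-- `wires g h` = multiplicity of the wire from the child `g` into the gate `h`. -/
  wires : gates → gates → ℕ
  label : gates → (X ⊕ K) ⊕ Bool
  rank : gates → ℕ
  acyclic : ∀ g h, 0 < wires g h → rank g < rank h
  input_no_incoming : ∀ g h, (label h).isLeft → wires g h = 0
  input_unique : ∀ g h (x : X ⊕ K), label g = Sum.inl x → label h = Sum.inl x → g = h
  out : gates
  out_no_outgoing : ∀ h, wires out h = 0
  out_unique : ∀ g, (∀ h, wires g h = 0) → g = out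

attribute [instance] Circuit.fintypeGates Circuit.decEqGates

namespace Circuit

variable {X K : Type}

/-- The size `‖C‖` of a circuit: the number of gates plus the number of wires, counted
with multiplicity. -/
def size (C : Circuit X K) : ℕ :=
  Fintype.card C.gates + ∑ g : C.gates, ∑ h : C.gates, C.wires g h

/-- `val` is a consistent valuation of the gates of `C` by polynomials: input gates get
their variable/constant, `+` gates the (multiplicity-weighted) sum of their children,
`×` gates the product of their children with multiplicities as exponents. -/
def Valuation [Field K] (C : Circuit X K) (val : C.gates → MvPolynomial X K) : Prop :=
  (∀ g (x : X), C.label g = Sum.inl (Sum.inl x) → val g = MvPolynomial.X x) ∧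
  (∀ g (c : K), C.label g = Sum.inl (Sum.inr c) → val g = MvPolynomial.C c) ∧
  (∀ g, C.label g = Sum.inr false → val g = ∑ h : C.gates, (C.wires h g) • val h) ∧
  (∀ g, C.label g = Sum.inr true → val g = ∏ h : C.gates, (val h) ^ (C.wires h g))

/-- The circuit `C` computes the polynomial `p`. -/
def Computes [Field K] (C : Circuit X K) (p : MvPolynomial X K) : Prop :=
  ∃ val, C.Valuation val ∧ val C.out = p

/-- `σ` is an automorphism of the circuit `C`: a permutation of the gates preserving wires
(with multiplicities, hence also non-wires) and the labels of internal gates. -/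
def IsAuto (C : Circuit X K) (σ : C.gates ≃ C.gates) : Prop :=
  (∀ g h, C.wires (σ g) (σ h) = C.wires g h) ∧
  (∀ g (b : Bool), C.label g = Sum.inr b → C.label (σ g) = Sum.inr b)

/-- `C` is `Γ`-symmetric: every `π ∈ Γ` (acting on the variables `X` and fixing the field
constants) extends to an automorphism of `C`. -/
def Symmetric (Γ : Type) [Group Γ] [MulAction Γ X] (C : Circuit X K) : Prop :=
  ∀ π : Γ, ∃ σ : C.gates ≃ C.gates, C.IsAuto σ ∧
    ∀ g (x : X ⊕ K), C.label g = Sum.inl x →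
      C.label (σ g) = Sum.inl (Sum.map (fun y => π • y) id x)

/-- `C` is rigid: the only automorphism fixing every input gate is the identity. -/
def Rigid (C : Circuit X K) : Prop :=
  ∀ σ : C.gates ≃ C.gates, C.IsAuto σ →
    (∀ g, (C.label g).isLeft → σ g = g) → σ = Equiv.refl C.gates

/-- `C` is a formula with multiedges: the internal gates form a tree, i.e. every internal
gate other than the output has exactly one parent gate. -/
def IsFormulaML (C : Circuit X K) : Prop :=
  ∀ g, (C.label g).isRight → g ≠ C.out →
    (Finset.univ.filter fun h => 0 < C.wires g h).card = 1

/-- `C` is a formula: no multiedges and the internal gates form a tree. -/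
def IsFormula (C : Circuit X K) : Prop :=
  (∀ g h, C.wires g h ≤ 1) ∧ C.IsFormulaML

/-- `C` is skew: every multiplication gate has at most one child that is an internal
(non-input) gate. -/
def IsSkew (C : Circuit X K) : Prop :=
  ∀ g, C.label g = Sum.inr true →
    (Finset.univ.filter fun h => 0 < C.wires h g ∧ (C.label h).isRight).card ≤ 1

end Circuit

namespace Circuit

variable {X K : Type}

section Rigidify

variable (C : Circuit X K)

/-- Automorphisms fixing all input gates. -/
def AMem (σ : C.gates ≃ C.gates) : Prop :=
  C.IsAuto σ ∧ ∀ g, (C.label g).isLeft → σ g = g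

variable {C}

lemma amem_refl : C.AMem (Equiv.refl C.gates) :=
  ⟨⟨fun _ _ => rfl, fun _ _ h => h⟩, fun _ _ => rfl⟩

lemma AMem.label_eq {σ} (hσ : C.AMem σ) (g : C.gates) : C.label (σ g) = C.label g := by
  rcases h : C.label g with x | b
  · rw [hσ.2 g (by rw [h]; rfl), h]
  · exact hσ.1.2 g b h

lemma AMem.symm {σ} (hσ : C.AMem σ) : C.AMem σ.symm := by
  have hl : ∀ g, C.label (σ.symm g) = C.label g := fun g => by
    conv_rhs => rw [← σ.apply_symm_apply g, hσ.label_eq]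
  refine ⟨⟨fun g h => ?_, fun g b hb => ?_⟩, fun g hg => ?_⟩
  · conv_rhs => rw [← σ.apply_symm_apply g, ← σ.apply_symm_apply h, hσ.1.1]
  · rw [hl, hb]
  · have h2 := hσ.2 (σ.symm g) (by rw [hl]; exact hg)
    rw [σ.apply_symm_apply] at h2
    exact h2.symm

lemma AMem.trans {σ τ} (hσ : C.AMem σ) (hτ : C.AMem τ) : C.AMem (σ.trans τ) := by
  refine ⟨⟨fun g h => ?_, fun g b hb => ?_⟩, fun g hg => ?_⟩
  · simp only [Equiv.trans_apply, hτ.1.1, hσ.1.1]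
  · simp only [Equiv.trans_apply]; exact hτ.1.2 _ b (hσ.1.2 g b hb)
  · simp only [Equiv.trans_apply, hσ.2 g hg, hτ.2 g hg]

variable (C)

instance ASetoid : Setoid C.gates :=
  ⟨fun g h => ∃ σ, C.AMem σ ∧ σ g = h,
   ⟨fun _ => ⟨Equiv.refl _, amem_refl, rfl⟩,
    fun {g h} ⟨σ, hσ, e⟩ => ⟨σ.symm, hσ.symm, by rw [← e, Equiv.symm_apply_apply]⟩,
    fun {g h k} ⟨σ, hσ, e⟩ ⟨τ, hτ, e'⟩ =>
      ⟨σ.trans τ, hσ.trans hτ, by rw [Equiv.trans_apply, e, e']⟩⟩⟩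

lemma qmk_smul {σ} (hσ : C.AMem σ) (g : C.gates) :
    (⟦σ g⟧ : Quotient (ASetoid C)) = ⟦g⟧ :=
  Quotient.sound ⟨σ.symm, hσ.symm, σ.symm_apply_apply g⟩

lemma fix_out {σ : C.gates ≃ C.gates} (hσ : C.IsAuto σ) : σ C.out = C.out := by
  apply C.out_unique
  intro h
  rw [← σ.apply_symm_apply h, hσ.1, C.out_no_outgoing]

open Classical in
/-- wires of the quotient circuit -/
noncomputable def qwires : Quotient (ASetoid C) → Quotient (ASetoid C) → ℕ :=
  Quotient.lift₂
    (fun g h => ∑ g' : C.gates,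
      if (⟦g'⟧ : Quotient (ASetoid C)) = ⟦g⟧ then C.wires g' h else 0)
    (by
      rintro g₁ h₁ g₂ h₂ hg ⟨σ, hσ, rfl⟩
      have hg' : (⟦g₁⟧ : Quotient (ASetoid C)) = ⟦g₂⟧ := Quotient.sound hg
      show (∑ g' : C.gates, if (⟦g'⟧ : Quotient (ASetoid C)) = ⟦g₁⟧ then C.wires g' h₁ else 0)
        = ∑ g' : C.gates, if (⟦g'⟧ : Quotient (ASetoid C)) = ⟦g₂⟧ then C.wires g' (σ h₁) else 0
      rw [← hg']
      exact Fintype.sum_equiv σ _ _ (fun g' => by rw [qmk_smul C hσ, hσ.1.1]))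

open Classical in
lemma qwires_mk (g h : C.gates) :
    qwires C ⟦g⟧ ⟦h⟧ = ∑ g' : C.gates,
      if (⟦g'⟧ : Quotient (ASetoid C)) = ⟦g⟧ then C.wires g' h else 0 := rfl

open Classical in
lemma qwires_sum (b : Quotient (ASetoid C)) (g : C.gates) :
    qwires C b ⟦g⟧ = ∑ h' : C.gates,
      if (⟦h'⟧ : Quotient (ASetoid C)) = b then C.wires h' g else 0 :=
  Quotient.inductionOn b (fun h => qwires_mk C h g)

lemma le_qwires (g h : C.gates) : C.wires g h ≤ qwires C ⟦g⟧ ⟦h⟧ := by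
  classical
  rw [qwires_mk]
  have h1 := Finset.single_le_sum
    (f := fun g' => if (⟦g'⟧ : Quotient (ASetoid C)) = ⟦g⟧ then C.wires g' h else 0)
    (fun i _ => Nat.zero_le _) (Finset.mem_univ g)
  simpa using h1

lemma qwires_pos {g h : C.gates} (hpos : 0 < qwires C ⟦g⟧ ⟦h⟧) :
    ∃ g', (⟦g'⟧ : Quotient (ASetoid C)) = ⟦g⟧ ∧ 0 < C.wires g' h := by
  classical
  rw [qwires_mk] at hpos
  obtain ⟨g', -, hne⟩ := Finset.exists_ne_zero_of_sum_ne_zero hpos.ne'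
  by_cases hc : (⟦g'⟧ : Quotient (ASetoid C)) = ⟦g⟧
  · exact ⟨g', hc, Nat.pos_of_ne_zero (by simpa [hc] using hne)⟩
  · simp [hc] at hne

/-- the quotient circuit obtained by merging gates in the same orbit -/
noncomputable def quot : Circuit X K where
  gates := Quotient (ASetoid C)
  fintypeGates := @Quotient.fintype _ _ (ASetoid C) (fun _ _ => Classical.propDecidable _)
  decEqGates := Classical.decEq _
  wires := qwires C
  label := Quotient.lift C.label (fun g h hr => by
    obtain ⟨σ, hσ, e⟩ := hr
    rw [← e, hσ.label_eq])
  rank := fun a => sInf {n | ∃ g, (⟦g⟧ : Quotient (ASetoid C)) = a ∧ C.rank g = n}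
  acyclic := by
    intro a b hpos
    obtain ⟨g, rfl⟩ := Quotient.exists_rep a
    obtain ⟨h, rfl⟩ := Quotient.exists_rep b
    obtain ⟨h₀, eh₀, rh₀⟩ := Nat.sInf_mem
      (s := {n | ∃ h', (⟦h'⟧ : Quotient (ASetoid C)) = ⟦h⟧ ∧ C.rank h' = n}) ⟨C.rank h, h, rfl, rfl⟩
    have hpos' : 0 < qwires C ⟦g⟧ ⟦h₀⟧ := by rw [eh₀]; exact hpos
    obtain ⟨g', eg', wg'⟩ := qwires_pos C hpos'
    have hlt := C.acyclic g' h₀ wg'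
    rw [rh₀] at hlt
    exact lt_of_le_of_lt (Nat.sInf_le ⟨g', eg', rfl⟩) hlt
  input_no_incoming := by
    intro a b hb
    obtain ⟨g, rfl⟩ := Quotient.exists_rep a
    obtain ⟨h, rfl⟩ := Quotient.exists_rep b
    rw [qwires_mk]
    exact Finset.sum_eq_zero (fun g' _ => by simp [C.input_no_incoming g' h hb])
  input_unique := by
    intro a b x ha hb
    obtain ⟨g, rfl⟩ := Quotient.exists_rep a
    obtain ⟨h, rfl⟩ := Quotient.exists_rep b
    exact congrArg _ (C.input_unique g h x ha hb)
  out := ⟦C.out⟧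
  out_no_outgoing := by
    intro b
    obtain ⟨h, rfl⟩ := Quotient.exists_rep b
    rw [qwires_mk]
    refine Finset.sum_eq_zero (fun g' _ => ?_)
    by_cases hc : (⟦g'⟧ : Quotient (ASetoid C)) = ⟦C.out⟧
    · obtain ⟨σ, hσ, e⟩ := Quotient.exact hc
      have hgo : g' = C.out := σ.injective (e.trans (fix_out C hσ.1).symm)
      rw [if_pos hc, hgo, C.out_no_outgoing]
    · rw [if_neg hc]
  out_unique := by
    intro a ha
    obtain ⟨g, rfl⟩ := Quotient.exists_rep a
    have hz : ∀ h, C.wires g h = 0 := fun h =>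
      Nat.le_zero.mp ((le_qwires C g h).trans (le_of_eq (ha ⟦h⟧)))
    exact congrArg _ (C.out_unique g hz)

private lemma sum_ite_class {M : Type} [AddCommMonoid M] {α : Type} [Fintype α] (b : α) (c : M)
    {D : ∀ a, Decidable (b = a)} : (∑ a : α, @ite _ (b = a) (D a) c 0) = c := by
  rw [Finset.sum_eq_single b]
  · exact if_pos rfl
  · intro a _ hne
    exact if_neg (fun e => hne e.symm)
  · intro h
    exact absurd (Finset.mem_univ b) h

private lemma prod_ite_class {M : Type} [CommMonoid M] {α : Type} [Fintype α] (b : α) (c : M)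
    {D : ∀ a, Decidable (b = a)} : (∏ a : α, @ite _ (b = a) (D a) c 1) = c := by
  rw [Finset.prod_eq_single b]
  · exact if_pos rfl
  · intro a _ hne
    exact if_neg (fun e => hne e.symm)
  · intro h
    exact absurd (Finset.mem_univ b) h

open Classical in
lemma qwires_out (a b : Quotient (ASetoid C)) :
    qwires C a b = ∑ g' : C.gates,
      if (⟦g'⟧ : Quotient (ASetoid C)) = a then C.wires g' b.out else 0 := by
  conv_lhs => rw [← Quotient.out_eq b]
  exact qwires_sum C a b.out

lemma quot_gates_card_le : Fintype.card (quot C).gates ≤ Fintype.card C.gates :=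
  Fintype.card_le_of_surjective (Quotient.mk (ASetoid C)) (fun b => Quotient.exists_rep b)

lemma quot_card_lt {σ} (hσ : C.AMem σ) (hne : σ ≠ Equiv.refl C.gates) :
    Fintype.card (quot C).gates < Fintype.card C.gates := by
  obtain ⟨g, hg⟩ : ∃ g, σ g ≠ g := by
    by_contra hcon
    push_neg at hcon
    exact hne (Equiv.ext hcon)
  exact Fintype.card_lt_of_surjective_not_injective (Quotient.mk (ASetoid C))
    (fun b => Quotient.exists_rep b) (fun hinj => hg (hinj (qmk_smul C hσ g)))

lemma quot_size : (quot C).size ≤ C.size := by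
  classical
  refine Nat.add_le_add (quot_gates_card_le C) ?_
  have hinj : Function.Injective (Quotient.out : (quot C).gates → C.gates) := fun a b e => by
    rw [← Quotient.out_eq a, ← Quotient.out_eq b, e]
  calc ∑ a : (quot C).gates, ∑ b : (quot C).gates, (quot C).wires a b
      = ∑ b : (quot C).gates, ∑ a : (quot C).gates, (quot C).wires a b := Finset.sum_comm
    _ = ∑ b : (quot C).gates, ∑ g' : C.gates, C.wires g' b.out := by
        refine Finset.sum_congr rfl fun b _ => ?_
        calc ∑ a : (quot C).gates, (quot C).wires a b
            = ∑ a : (quot C).gates, ∑ g' : C.gates,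
                if (⟦g'⟧ : Quotient (ASetoid C)) = a then C.wires g' b.out else 0 :=
              Finset.sum_congr rfl fun a _ => by rw [show (quot C).wires a b = qwires C a b from rfl]; convert qwires_out C a b
          _ = ∑ g' : C.gates, ∑ a : (quot C).gates,
                if (⟦g'⟧ : Quotient (ASetoid C)) = a then C.wires g' b.out else 0 :=
              Finset.sum_comm
          _ = ∑ g' : C.gates, C.wires g' b.out := by
              refine Finset.sum_congr rfl fun g' _ => ?_
              exact sum_ite_class _ _
    _ ≤ ∑ h : C.gates, ∑ g' : C.gates, C.wires g' h := by
        have him : ∑ h ∈ Finset.univ.image (Quotient.out : (quot C).gates → C.gates),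
            (fun h => ∑ g' : C.gates, C.wires g' h) h
            = ∑ b : (quot C).gates, (fun h => ∑ g' : C.gates, C.wires g' h) b.out :=
          Finset.sum_image (fun a _ b _ e => hinj e)
        rw [← him]
        exact Finset.sum_le_sum_of_subset (Finset.subset_univ _)
    _ = ∑ g' : C.gates, ∑ h : C.gates, C.wires g' h := Finset.sum_comm

lemma Valuation.apply_amem [Field K] {C : Circuit X K} {val : C.gates → MvPolynomial X K}
    (hv : C.Valuation val) {σ} (hσ : C.AMem σ) (g : C.gates) : val (σ g) = val g := by
  obtain ⟨h1, h2, h3, h4⟩ := hv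
  suffices H : ∀ n g, C.rank g < n → val (σ g) = val g from
    H (C.rank g + 1) g (Nat.lt_succ_self _)
  intro n
  induction n with
  | zero => intro g hg; omega
  | succ n ih =>
    intro g hg
    rcases hl : C.label g with x | b
    · rw [hσ.2 g (by rw [hl]; rfl)]
    · cases b
      · rw [h3 _ (hσ.1.2 g false hl), h3 _ hl]
        rw [← Fintype.sum_equiv σ
          (fun h => C.wires (σ h) (σ g) • val (σ h))
          (fun h => C.wires h (σ g) • val h) (fun h => rfl)]
        refine Finset.sum_congr rfl fun h _ => ?_
        rw [hσ.1.1]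
        rcases Nat.eq_zero_or_pos (C.wires h g) with h0 | h0
        · rw [h0, zero_smul, zero_smul]
        · rw [ih h (lt_of_lt_of_le (C.acyclic h g h0) (Nat.lt_succ_iff.mp hg))]
      · rw [h4 _ (hσ.1.2 g true hl), h4 _ hl]
        rw [← Fintype.prod_equiv σ
          (fun h => val (σ h) ^ C.wires (σ h) (σ g))
          (fun h => val h ^ C.wires h (σ g)) (fun h => rfl)]
        refine Finset.prod_congr rfl fun h _ => ?_
        rw [hσ.1.1]
        rcases Nat.eq_zero_or_pos (C.wires h g) with h0 | h0
        · rw [h0, pow_zero, pow_zero]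
        · rw [ih h (lt_of_lt_of_le (C.acyclic h g h0) (Nat.lt_succ_iff.mp hg))]

lemma quot_computes [Field K] {p : MvPolynomial X K} (hcomp : C.Computes p) :
    (quot C).Computes p := by
  classical
  obtain ⟨val, hv, hout⟩ := hcomp
  refine ⟨Quotient.lift val (fun g h hr => by
      obtain ⟨σ, hσ, e⟩ := hr
      rw [← e, hv.apply_amem hσ]), ⟨?_, ?_, ?_, ?_⟩, hout⟩
  · intro a x ha
    obtain ⟨g, rfl⟩ := Quotient.exists_rep a
    exact hv.1 g x ha
  · intro a c ha
    obtain ⟨g, rfl⟩ := Quotient.exists_rep a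
    exact hv.2.1 g c ha
  · intro a ha
    obtain ⟨g, rfl⟩ := Quotient.exists_rep a
    show val g = _
    rw [hv.2.2.1 g ha]
    symm
    calc ∑ b : (quot C).gates, (quot C).wires b ⟦g⟧ • Quotient.lift val _ b
        = ∑ b : (quot C).gates, ∑ h' : C.gates,
            (if (⟦h'⟧ : Quotient (ASetoid C)) = b then C.wires h' g • val h' else 0) := by
          refine Finset.sum_congr rfl fun b _ => ?_
          rw [show (quot C).wires b ⟦g⟧ = _ from qwires_sum C b g, Finset.sum_smul]
          refine Finset.sum_congr rfl fun h' _ => ?_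
          rw [ite_smul, zero_smul]
          split_ifs with hc
          · rw [← hc]; rfl
          · rfl
      _ = ∑ h' : C.gates, ∑ b : (quot C).gates,
            (if (⟦h'⟧ : Quotient (ASetoid C)) = b then C.wires h' g • val h' else 0) :=
          Finset.sum_comm
      _ = ∑ h' : C.gates, C.wires h' g • val h' := by
          refine Finset.sum_congr rfl fun h' _ => ?_
          exact sum_ite_class _ _
  · intro a ha
    obtain ⟨g, rfl⟩ := Quotient.exists_rep a
    show val g = _
    rw [hv.2.2.2 g ha]
    symm
    calc ∏ b : (quot C).gates, Quotient.lift val _ b ^ (quot C).wires b ⟦g⟧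
        = ∏ b : (quot C).gates, ∏ h' : C.gates,
            (if (⟦h'⟧ : Quotient (ASetoid C)) = b then val h' ^ C.wires h' g else 1) := by
          refine Finset.prod_congr rfl fun b _ => ?_
          rw [show (quot C).wires b ⟦g⟧ = _ from qwires_sum C b g,
            ← Finset.prod_pow_eq_pow_sum]
          refine Finset.prod_congr rfl fun h' _ => ?_
          split_ifs with hc
          · rw [← hc]; rfl
          · rw [pow_zero]
      _ = ∏ h' : C.gates, ∏ b : (quot C).gates,
            (if (⟦h'⟧ : Quotient (ASetoid C)) = b then val h' ^ C.wires h' g else 1) :=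
          Finset.prod_comm
      _ = ∏ h' : C.gates, val h' ^ C.wires h' g := by
          refine Finset.prod_congr rfl fun h' _ => ?_
          exact prod_ite_class _ _


lemma isauto_trans {σ τ : C.gates ≃ C.gates} (hσ : C.IsAuto σ) (hτ : C.IsAuto τ) :
    C.IsAuto (σ.trans τ) :=
  ⟨fun g h => by simp only [Equiv.trans_apply, hτ.1, hσ.1],
   fun g b hb => by simp only [Equiv.trans_apply]; exact hτ.2 _ b (hσ.2 g b hb)⟩

lemma symm_pack {Γ : Type} [Group Γ] [MulAction Γ X] {π : Γ} {σ : C.gates ≃ C.gates}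
    (ha : C.IsAuto σ)
    (hl : ∀ g x, C.label g = Sum.inl x →
      C.label (σ g) = Sum.inl (Sum.map (fun y => π • y) id x)) :
    C.IsAuto σ.symm ∧ ∀ g x, C.label g = Sum.inl x →
      C.label (σ.symm g) = Sum.inl (Sum.map (fun y => π⁻¹ • y) id x) := by
  have hw : ∀ g h, C.wires (σ.symm g) (σ.symm h) = C.wires g h := fun g h => by
    conv_rhs => rw [← σ.apply_symm_apply g, ← σ.apply_symm_apply h, ha.1]
  constructor
  · refine ⟨hw, fun g b hb => ?_⟩
    rcases hc : C.label (σ.symm g) with x | b'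
    · have h2 := hl _ _ hc
      rw [σ.apply_symm_apply, hb] at h2
      simp at h2
    · have h2 := ha.2 _ b' hc
      rw [σ.apply_symm_apply, hb] at h2
      rw [Sum.inr.injEq] at h2
      rw [h2]
  · intro g x hx
    rcases hc : C.label (σ.symm g) with y | b'
    · have h2 := hl _ _ hc
      rw [σ.apply_symm_apply, hx] at h2
      rw [Sum.inl.injEq] at h2
      rw [h2]
      rcases y with v | c <;> simp
    · have h2 := ha.2 _ b' hc
      rw [σ.apply_symm_apply, hx] at h2
      simp at h2

lemma amem_conj {σ τ : C.gates ≃ C.gates} (ha : C.IsAuto σ) (ha' : C.IsAuto σ.symm)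
    (hleft : ∀ g, (C.label g).isLeft → (C.label (σ.symm g)).isLeft)
    (hτ : C.AMem τ) : C.AMem ((σ.symm.trans τ).trans σ) := by
  refine ⟨isauto_trans C (isauto_trans C ha' hτ.1) ha, fun g hg => ?_⟩
  simp only [Equiv.trans_apply]
  rw [hτ.2 _ (hleft g hg), σ.apply_symm_apply]

lemma quot_symmetric {Γ : Type} [Group Γ] [MulAction Γ X] (hsym : C.Symmetric Γ) :
    (quot C).Symmetric Γ := by
  intro π
  obtain ⟨σ, ha, hl⟩ := hsym π
  obtain ⟨ha', hl'⟩ := symm_pack C ha hl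
  have hleft : ∀ g, (C.label g).isLeft → (C.label (σ.symm g)).isLeft := fun g hg => by
    rcases hx : C.label g with x | b
    · rw [hl' g x hx]; rfl
    · rw [hx] at hg; cases hg
  have hleft' : ∀ g, (C.label g).isLeft → (C.label (σ g)).isLeft := fun g hg => by
    rcases hx : C.label g with x | b
    · rw [hl g x hx]; rfl
    · rw [hx] at hg; cases hg
  have hiff : ∀ a b : C.gates, (ASetoid C).r a b ↔ (ASetoid C).r (σ a) (σ b) := by
    intro a b
    constructor
    · rintro ⟨τ, hτ, rfl⟩
      refine ⟨(σ.symm.trans τ).trans σ, amem_conj C ha ha' hleft hτ, ?_⟩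
      simp only [Equiv.trans_apply, Equiv.symm_apply_apply]
    · rintro ⟨τ, hτ, he⟩
      refine ⟨(σ.trans τ).trans σ.symm, ?_, ?_⟩
      · have h2 := amem_conj C (σ := σ.symm) ha' ha hleft' hτ
        simpa using h2
      · simp only [Equiv.trans_apply]
        rw [he, Equiv.symm_apply_apply]
  refine ⟨Quotient.congr σ hiff, ⟨?_, ?_⟩, ?_⟩
  · intro a b
    obtain ⟨g, rfl⟩ := Quotient.exists_rep a
    obtain ⟨h, rfl⟩ := Quotient.exists_rep b
    show qwires C ⟦σ g⟧ ⟦σ h⟧ = qwires C ⟦g⟧ ⟦h⟧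
    rw [qwires_mk, qwires_mk]
    symm
    refine Fintype.sum_equiv σ _ _ fun x => ?_
    rw [ha.1]
    have hcc : ((⟦x⟧ : Quotient (ASetoid C)) = ⟦g⟧) ↔ ((⟦σ x⟧ : Quotient (ASetoid C)) = ⟦σ g⟧) := by
      rw [Quotient.eq, Quotient.eq]
      exact hiff x g
    by_cases hxg : (⟦x⟧ : Quotient (ASetoid C)) = ⟦g⟧
    · rw [if_pos hxg, if_pos (hcc.mp hxg)]
    · rw [if_neg hxg, if_neg (fun hh => hxg (hcc.mpr hh))]
  · intro a b hb
    obtain ⟨g, rfl⟩ := Quotient.exists_rep a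
    show C.label (σ g) = Sum.inr b
    exact ha.2 g b hb
  · intro a x hx
    obtain ⟨g, rfl⟩ := Quotient.exists_rep a
    show C.label (σ g) = _
    exact hl g x hx

lemma quot_formulaML (hf : C.IsFormulaML) : (quot C).IsFormulaML := by
  classical
  intro a ha hout
  obtain ⟨g, rfl⟩ := Quotient.exists_rep a
  have hg : (C.label g).isRight := ha
  have hgo : g ≠ C.out := fun e => hout (congrArg _ e)
  obtain ⟨h₀, hh₀⟩ := Finset.card_eq_one.mp (hf g hg hgo)
  have hmem : ∀ h, 0 < C.wires g h ↔ h = h₀ := fun h => by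
    constructor
    · intro hw
      have h2 : h ∈ Finset.univ.filter fun h => 0 < C.wires g h :=
        Finset.mem_filter.mpr ⟨Finset.mem_univ _, hw⟩
      rw [hh₀] at h2
      exact Finset.mem_singleton.mp h2
    · intro e
      have h2 := Finset.mem_singleton_self h₀
      rw [← hh₀] at h2
      rw [e]
      exact (Finset.mem_filter.mp h2).2
  rw [Finset.card_eq_one]
  refine ⟨Quotient.mk (ASetoid C) h₀, ?_⟩
  ext b
  simp only [Finset.mem_filter, Finset.mem_univ, true_and, Finset.mem_singleton]
  constructor
  · intro hb
    obtain ⟨h, rfl⟩ := Quotient.exists_rep b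
    obtain ⟨g', hg', hw⟩ := qwires_pos C hb
    obtain ⟨τ, hτ, hτg⟩ := Quotient.exact hg'
    have hw2 : 0 < C.wires g (τ h) := by
      rw [← hτg, hτ.1.1]
      exact hw
    rw [← (hmem (τ h)).mp hw2]
    exact Finset.mem_singleton.mpr (qmk_smul C hτ h).symm
  · intro hb; obtain rfl := Finset.mem_singleton.mp hb
    exact lt_of_lt_of_le ((hmem h₀).mpr rfl) (le_qwires C g h₀)

lemma quot_skew (hs : C.IsSkew) : (quot C).IsSkew := by
  classical
  intro a ha
  obtain ⟨g, rfl⟩ := Quotient.exists_rep a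
  have hg : C.label g = Sum.inr true := ha
  rw [Finset.card_le_one]
  intro b₁ hb₁ b₂ hb₂
  simp only [Finset.mem_filter, Finset.mem_univ, true_and] at hb₁ hb₂
  obtain ⟨h₁, rfl⟩ := Quotient.exists_rep b₁
  obtain ⟨h₂, rfl⟩ := Quotient.exists_rep b₂
  obtain ⟨h₁', e₁, w₁⟩ := qwires_pos C hb₁.1
  obtain ⟨h₂', e₂, w₂⟩ := qwires_pos C hb₂.1
  obtain ⟨τ₁, hτ₁, hτe₁⟩ := Quotient.exact e₁
  obtain ⟨τ₂, hτ₂, hτe₂⟩ := Quotient.exact e₂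
  have l₁ : (C.label h₁').isRight := by
    rw [← hτ₁.label_eq h₁', hτe₁]
    exact hb₁.2
  have l₂ : (C.label h₂').isRight := by
    rw [← hτ₂.label_eq h₂', hτe₂]
    exact hb₂.2
  have hS := Finset.card_le_one.mp (hs g hg)
  have heq : h₁' = h₂' :=
    hS _ (Finset.mem_filter.mpr ⟨Finset.mem_univ _, w₁, l₁⟩)
       _ (Finset.mem_filter.mpr ⟨Finset.mem_univ _, w₂, l₂⟩)
  rw [← e₁, ← e₂, heq]

end Rigidify
end Circuit

/-- Rigidification: if `C` is a `Γ`-symmetric circuit over the variables `X` and the field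
`K`, then there is a `Γ`-symmetric *rigid* circuit `C'` with `‖C'‖ ≤ ‖C‖` computing the
same polynomial; moreover if `C` is a symmetric formula then `C'` is a symmetric formula
with multiedges, and if `C` is a symmetric skew circuit then so is `C'`. -/
theorem rigidification (X K Γ : Type) [Field K] [Group Γ] [MulAction Γ X]
    (C : Circuit X K) (p : MvPolynomial X K)
    (hsym : Circuit.Symmetric Γ C) (hcomp : C.Computes p) :
    ∃ C' : Circuit X K,
      Circuit.Symmetric Γ C' ∧ C'.Rigid ∧ C'.size ≤ C.size ∧ C'.Computes p ∧
      (C.IsFormula → C'.IsFormulaML) ∧ (C.IsSkew → C'.IsSkew) := by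
  suffices H : ∀ (n : ℕ) (C : Circuit X K), Fintype.card C.gates ≤ n →
      Circuit.Symmetric Γ C → C.Computes p →
      ∃ C' : Circuit X K,
        Circuit.Symmetric Γ C' ∧ C'.Rigid ∧ C'.size ≤ C.size ∧ C'.Computes p ∧
        (C.IsFormulaML → C'.IsFormulaML) ∧ (C.IsSkew → C'.IsSkew) by
    obtain ⟨C', h1, h2, h3, h4, h5, h6⟩ := H (Fintype.card C.gates) C le_rfl hsym hcomp
    exact ⟨C', h1, h2, h3, h4, fun hf => h5 hf.2, h6⟩
  intro n
  induction n with
  | zero =>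
    intro C hcard _ _
    have hpos : 0 < Fintype.card C.gates := Fintype.card_pos_iff.mpr ⟨C.out⟩
    omega
  | succ n ih =>
    intro C hcard hsym hcomp
    by_cases hrig : C.Rigid
    · exact ⟨C, hsym, hrig, le_rfl, hcomp, fun h => h, fun h => h⟩
    · rw [Circuit.Rigid] at hrig
      push_neg at hrig
      obtain ⟨σ, hauto, hfix, hne⟩ := hrig
      have hlt := Circuit.quot_card_lt C (σ := σ) ⟨hauto, hfix⟩ hne
      obtain ⟨C', h1, h2, h3, h4, h5, h6⟩ := ih (Circuit.quot C) (by omega)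
        (Circuit.quot_symmetric C hsym) (Circuit.quot_computes C hcomp)
      exact ⟨C', h1, h2, le_trans h3 (Circuit.quot_size C), h4,
        fun hf => h5 (Circuit.quot_formulaML C hf), fun hs => h6 (Circuit.quot_skew C hs)⟩
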